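/- Let q be an odd prime power, s an odd divisor of q+1, h an odd positive integer with h ≤ s-1, l = (q²-1)/s, g a primitive element of F_{q²}, ξ = g^l, and c = (s-h)/2 + 1. Let A be the h×h matrix with rows indexed by 0 ≤ row ≤ h-1 where row 0 is (1,1,...,1) and row ν+1 (for 0 ≤ ν ≤ h-2) has entries ξ^{k(c+ν)} for 0 ≤ k ≤ h-1. Then the unique solution u = (u_0,...,u_{h-1}) ∈ F_{q²}^h of A·uᵀ = (1,0,...,0)ᵀ has all coordinates u_k nonzero and lying in the subfield F_q. -/

import Mathlib

open Polynomial Finset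

lemma stmt8_comp_coeff {F : Type*} [CommRing F] (p : F[X]) (b : F) (k : ℕ) :
    (p.comp (C b * X)).coeff k = b ^ k * p.coeff k := by
  induction p using Polynomial.induction_on' with
  | add p q hp hq => simp [add_comp, hp, hq, mul_add]
  | monomial e a =>
    rw [monomial_comp, mul_pow, ← C_pow, coeff_monomial]
    rw [show C a * (C (b ^ e) * X ^ e) = C (a * b ^ e) * X ^ e by rw [C_mul]; ring]
    rw [coeff_C_mul, coeff_X_pow]
    by_cases he : e = k
    · subst he; simp [mul_comm]
    · simp [he, Ne.symm he]

lemma stmt8_coeff_ne_zero {F : Type*} [Field F] (ζ : F) {s : ℕ} (hord : orderOf ζ = s)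
    (hs : 0 < s) (a n : ℕ) (hn : n < s) :
    ∀ k ≤ n, (∏ i ∈ range n, (X - C (ζ ^ (a + 1 + i)))).coeff k ≠ 0 := by
  have hpows : ζ ^ s = 1 := hord ▸ pow_orderOf_eq_one ζ
  have hζne : ζ ≠ 0 := by
    intro h; rw [h, zero_pow hs.ne'] at hpows; exact zero_ne_one hpows
  have hne1 : ∀ j, 0 < j → j < s → ζ ^ j ≠ 1 := by
    intro j hj1 hj2 hj
    have := orderOf_le_of_pow_eq_one hj1 hj
    rw [hord] at this; omega
  set P : F[X] := ∏ i ∈ range n, (X - C (ζ ^ (a + 1 + i))) with hPdef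
  have hmonic : P.Monic := monic_prod_of_monic _ _ fun i _ => monic_X_sub_C _
  have hdeg : P.natDegree = n := by
    rw [hPdef, natDegree_prod_of_monic _ _ fun i _ => monic_X_sub_C _]
    simp only [natDegree_X_sub_C, Finset.sum_const, card_range, smul_eq_mul, mul_one]
  have hcn : P.coeff n = 1 := by
    have := hmonic.coeff_natDegree
    rwa [hdeg] at this
  -- functional equation
  have hcomp : P.comp (C ζ * X) = C (ζ ^ n) * ∏ i ∈ range n, (X - C (ζ ^ (a + i))) := by
    rw [hPdef, Polynomial.prod_comp]
    rw [Finset.prod_congr rfl (g := fun i => C ζ * (X - C (ζ ^ (a + i))))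
      (fun i _ => by
        rw [sub_comp, X_comp, C_comp, show a + 1 + i = (a + i) + 1 from by omega, pow_succ,
          C_mul]; ring)]
    rw [Finset.prod_mul_distrib, Finset.prod_const, card_range, C_pow]
  have hfe : (X - C (ζ ^ (a + n))) * P.comp (C ζ * X)
      = C (ζ ^ n) * ((X - C (ζ ^ a)) * P) := by
    rw [hcomp]
    have h1 : (X - C (ζ ^ (a + n))) * (C (ζ ^ n) * ∏ i ∈ range n, (X - C (ζ ^ (a + i))))
        = C (ζ ^ n) * ∏ i ∈ range (n + 1), (X - C (ζ ^ (a + i))) := by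
      rw [prod_range_succ]; ring
    rw [h1]
    congr 1
    rw [prod_range_succ']
    rw [Finset.prod_congr rfl (g := fun i => X - C (ζ ^ (a + 1 + i)))
      (fun i _ => by rw [show a + (i + 1) = a + 1 + i from by omega])]
    rw [add_zero, ← hPdef, mul_comm]
  have hrel : ∀ k, P.coeff k * (ζ ^ k - ζ ^ n)
      = P.coeff (k + 1) * (ζ ^ (n + a) * (ζ ^ (k + 1) - 1)) := by
    intro k
    have h := congrArg (fun p : F[X] => p.coeff (k + 1)) hfe
    simp only [mul_comm (X - C (ζ ^ (a + n))) (P.comp (C ζ * X))] at h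
    rw [coeff_mul_X_sub_C, stmt8_comp_coeff, stmt8_comp_coeff, coeff_C_mul,
      mul_comm (X - C (ζ ^ a)) P, coeff_mul_X_sub_C] at h
    linear_combination h
  -- downward induction
  suffices H : ∀ d k, k + d = n → P.coeff k ≠ 0 by
    intro k hk; exact H (n - k) k (by omega)
  intro d
  induction d with
  | zero => intro k hk; rw [show k = n from by omega, hcn]; exact one_ne_zero
  | succ d ih =>
    intro k hk
    have h1 : P.coeff (k + 1) ≠ 0 := ih (k + 1) (by omega)
    have hz1 : ζ ^ (k + 1) - 1 ≠ 0 := sub_ne_zero.mpr (hne1 (k + 1) (by omega) (by omega))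
    have hz2 : ζ ^ (n + a) ≠ 0 := pow_ne_zero _ hζne
    intro hck
    have h2 := hrel k
    rw [hck, zero_mul] at h2
    exact (mul_ne_zero h1 (mul_ne_zero hz2 hz1)) h2.symm

theorem stmt_8 (q s h : ℕ) (hq : IsPrimePow q) (hqodd : Odd q)
    (hsodd : Odd s) (hsdvd : s ∣ q + 1)
    (hh : 0 < h) (hhodd : Odd h) (hhs : h ≤ s - 1)
    (F : Type*) [Field F] [Fintype F] (hF : Fintype.card F = q ^ 2)
    (g : F) (hg : orderOf g = q ^ 2 - 1) :
    let A : Matrix (Fin h) (Fin h) F := Matrix.of fun i k =>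
      if (i : ℕ) = 0 then (1 : F)
      else (g ^ ((q ^ 2 - 1) / s)) ^ ((k : ℕ) * ((s - h) / 2 + (i : ℕ)))
    let e : Fin h → F := fun i => if (i : ℕ) = 0 then 1 else 0
    (∃! u : Fin h → F, A.mulVec u = e) ∧
      ∀ u : Fin h → F, A.mulVec u = e → ∀ k, u k ≠ 0 ∧ (u k) ^ q = u k := by
  intro A e
  -- numeric facts
  have hq2 : 2 ≤ q := hq.two_le
  have hq3 : 3 ≤ q := by
    obtain ⟨t, ht⟩ := hqodd; omega
  obtain ⟨so, hso⟩ := hsodd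
  obtain ⟨ho, hho⟩ := hhodd
  have hs1 : 1 ≤ s := Nat.pos_of_dvd_of_pos hsdvd (by omega)
  have hhs2 : h + 2 ≤ s := by omega
  have hm2 : 2 * ((s - h) / 2) = s - h := by omega
  set m := (s - h) / 2 with hmdef
  set l := (q ^ 2 - 1) / s with hldef
  have hq21 : q ^ 2 - 1 = (q + 1) * (q - 1) := by
    have := Nat.sq_sub_sq q 1
    simpa using this
  have hsq : s ∣ q ^ 2 - 1 := hq21 ▸ Dvd.dvd.mul_right hsdvd _
  have hq2pos : 0 < q ^ 2 - 1 := by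
    have h9 : 3 * 3 ≤ q * q := Nat.mul_le_mul hq3 hq3
    have : q ^ 2 = q * q := sq q
    omega
  have hls : l * s = q ^ 2 - 1 := Nat.div_mul_cancel hsq
  have hlpos : 0 < l := Nat.div_pos (Nat.le_of_dvd hq2pos hsq) (by omega)
  set ζ := g ^ l with hζdef
  have hordζ : orderOf ζ = s := by
    rw [hζdef, orderOf_pow' g hlpos.ne', hg, Nat.gcd_eq_right ⟨s, hls.symm⟩, ← hls,
      Nat.mul_div_cancel_left _ hlpos]
  have hpows : ζ ^ s = 1 := hordζ ▸ pow_orderOf_eq_one ζ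
  have hζne : ζ ≠ 0 := by
    intro hz; rw [hz, zero_pow (by omega)] at hpows; exact zero_ne_one hpows
  have hne1 : ∀ j, 0 < j → j < s → ζ ^ j ≠ 1 := by
    intro j hj1 hj2 hj
    have := orderOf_le_of_pow_eq_one hj1 hj
    rw [hordζ] at this; omega
  have hzpow : ∀ N M K : ℕ, s ∣ N + K → s ∣ M + K → ζ ^ N = ζ ^ M := by
    intro N M K h1 h2
    have e1 : ζ ^ N * ζ ^ K = 1 := by
      rw [← pow_add]; exact orderOf_dvd_iff_pow_eq_one.mp (hordζ ▸ h1)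
    have e2 : ζ ^ M * ζ ^ K = 1 := by
      rw [← pow_add]; exact orderOf_dvd_iff_pow_eq_one.mp (hordζ ▸ h2)
    exact mul_right_cancel₀ (pow_ne_zero _ hζne) (e1.trans e2.symm)
  have hexp_inj : ∀ a b : ℕ, a < b → b < s → ζ ^ a ≠ ζ ^ b := by
    intro a b hab hbs heq
    have h4 : ζ ^ a * ζ ^ (b - a) = ζ ^ a * 1 := by
      rw [← pow_add, show a + (b - a) = b from by omega, mul_one]; exact heq.symm
    exact hne1 (b - a) (by omega) (by omega) (mul_left_cancel₀ (pow_ne_zero _ hζne) h4)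
  -- nodes
  set x : Fin h → F := fun i => if (i : ℕ) = 0 then 1 else ζ ^ (m + (i : ℕ)) with hxdef
  have hxinj : Function.Injective x := by
    intro i j hij
    simp only [hxdef] at hij
    have hi1 : (i : ℕ) < h := i.isLt
    have hj1 : (j : ℕ) < h := j.isLt
    by_cases hi : (i : ℕ) = 0 <;> by_cases hj : (j : ℕ) = 0
    · exact Fin.ext (by omega)
    · rw [if_pos hi, if_neg hj] at hij
      exact absurd hij.symm (hne1 (m + j) (by omega) (by omega))
    · rw [if_neg hi, if_pos hj] at hij
      exact absurd hij (hne1 (m + i) (by omega) (by omega))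
    · rw [if_neg hi, if_neg hj] at hij
      rcases Nat.lt_trichotomy (i : ℕ) (j : ℕ) with hlt | heq | hgt
      · exact absurd hij (hexp_inj _ _ (by omega) (by omega))
      · exact Fin.ext heq
      · exact absurd hij.symm (hexp_inj _ _ (by omega) (by omega))
  have hA : A = Matrix.vandermonde x := by
    ext i k
    show (if (i : ℕ) = 0 then (1 : F) else ζ ^ ((k : ℕ) * (m + (i : ℕ)))) = x i ^ (k : ℕ)
    by_cases hi : (i : ℕ) = 0
    · simp [hxdef, hi]
    · rw [if_neg hi, hxdef]
      simp only [hi, if_false]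
      exact pow_mul' ζ _ _
  have hdet : A.det ≠ 0 := by
    rw [hA]; exact Matrix.det_vandermonde_ne_zero_iff.mpr hxinj
  have hunit : IsUnit A.det := isUnit_iff_ne_zero.mpr hdet
  have huniq : ∀ u v : Fin h → F, A.mulVec u = e → A.mulVec v = e → u = v := by
    intro u v hu hv
    have h1 : A⁻¹.mulVec (A.mulVec u) = A⁻¹.mulVec (A.mulVec v) := by rw [hu, hv]
    rwa [Matrix.mulVec_mulVec, Matrix.mulVec_mulVec, Matrix.nonsing_inv_mul A hunit,
      Matrix.one_mulVec, Matrix.one_mulVec] at h1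
  -- explicit solution
  set n := h - 1 with hndef
  set P : F[X] := ∏ i ∈ range n, (X - C (ζ ^ (m + 1 + i))) with hPdef
  have hcoeffne : ∀ k ≤ n, P.coeff k ≠ 0 :=
    stmt8_coeff_ne_zero ζ hordζ (by omega) m n (by omega)
  have hdegP : P.natDegree = n := by
    rw [hPdef, natDegree_prod_of_monic _ _ fun i _ => monic_X_sub_C _]
    simp only [natDegree_X_sub_C, Finset.sum_const, card_range, smul_eq_mul, mul_one]
  have hmh : m + h ≤ s := by omega
  have hev1 : P.eval 1 ≠ 0 := by
    rw [hPdef, eval_prod]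
    apply Finset.prod_ne_zero_iff.mpr
    intro i hi
    rw [Finset.mem_range] at hi
    simp only [eval_sub, eval_X, eval_C]
    exact sub_ne_zero.mpr (Ne.symm (hne1 (m + 1 + i) (by omega) (by omega)))
  set v : Fin h → F := fun k => (P.eval 1)⁻¹ * P.coeff k with hvdef
  have hAv : A.mulVec v = e := by
    funext i
    rw [hA]
    show ∑ k : Fin h, Matrix.vandermonde x i k * v k = e i
    have hsum : ∀ y : F, ∑ k : Fin h, y ^ (k : ℕ) * v k = (P.eval 1)⁻¹ * P.eval y := by
      intro y
      rw [Polynomial.eval_eq_sum_range' (n := h) (by omega) y, Finset.mul_sum,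
        ← Fin.sum_univ_eq_sum_range (fun j => (P.eval 1)⁻¹ * (P.coeff j * y ^ j)) h]
      exact Finset.sum_congr rfl fun k _ => by rw [hvdef]; ring
    have hvdm : ∀ k : Fin h, Matrix.vandermonde x i k = x i ^ (k : ℕ) := fun k => rfl
    simp only [hvdm]
    rw [hsum (x i)]
    by_cases hi : (i : ℕ) = 0
    · have hx1 : x i = 1 := by simp [hxdef, hi]
      have hei : e i = 1 := by
        have h0 : e i = (if (i : ℕ) = 0 then (1 : F) else 0) := rfl
        rw [h0, if_pos hi]
      rw [hx1, hei]
      exact inv_mul_cancel₀ hev1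
    · have hxi : x i = ζ ^ (m + (i : ℕ)) := by simp [hxdef, hi]
      have hroot : P.eval (ζ ^ (m + (i : ℕ))) = 0 := by
        rw [hPdef, eval_prod]
        apply Finset.prod_eq_zero (i := (i : ℕ) - 1)
        · rw [Finset.mem_range]; have := i.isLt; omega
        · rw [show m + 1 + ((i : ℕ) - 1) = m + (i : ℕ) from by omega]
          simp
      have hei : e i = 0 := by
        have h0 : e i = (if (i : ℕ) = 0 then (1 : F) else 0) := rfl
        rw [h0, if_neg hi]
      rw [hxi, hroot, mul_zero, hei]
  -- characteristic facts
  obtain ⟨p, kk, hpP, hkk, hqpk⟩ := hq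
  have hpp : p.Prime := Nat.prime_iff.mpr hpP
  haveI hcp : CharP F (ringChar F) := ringChar.charP F
  haveI hcF : Fact (ringChar F).Prime := ⟨CharP.char_is_prime F (ringChar F)⟩
  obtain ⟨nn, hnp, hcard⟩ := FiniteField.card F (ringChar F)
  have hpchar : p = ringChar F := by
    have h1 : p ∣ ringChar F ^ (nn : ℕ) := by
      rw [← hcard, hF, ← hqpk, ← pow_mul]
      exact dvd_pow_self p (by positivity)
    exact (Nat.prime_dvd_prime_iff_eq hpp hcF.out).mp (hpp.dvd_of_dvd_pow h1)
  have hfrob : ∀ (f : Fin h → F), (∑ k, f k) ^ q = ∑ k, (f k) ^ q := by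
    intro f
    rw [← hqpk, hpchar]
    exact sum_pow_char_pow (ringChar F) kk Finset.univ f
  -- entry access helpers
  have hAapp : ∀ (i k : Fin h),
      A i k = if (i : ℕ) = 0 then (1 : F) else ζ ^ ((k : ℕ) * (m + (i : ℕ))) :=
    fun i k => rfl
  have heapp : ∀ i : Fin h, e i = if (i : ℕ) = 0 then (1 : F) else 0 := fun i => rfl
  have hmulapp : ∀ (B : Matrix (Fin h) (Fin h) F) (u : Fin h → F) (i : Fin h),
      B.mulVec u i = ∑ k, B i k * u k := fun B u i => rfl
  -- the permutation induced by Frobenius on the nodes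
  set σ : Fin h → Fin h := fun j =>
    if hj : (j : ℕ) = 0 then j else ⟨h - (j : ℕ), by have := j.isLt; omega⟩ with hσdef
  have hσ0 : ∀ j : Fin h, (j : ℕ) = 0 → σ j = j := by
    intro j hj; simp [hσdef, hj]
  have hσ1 : ∀ j : Fin h, ¬ (j : ℕ) = 0 → ((σ j) : ℕ) = h - (j : ℕ) := by
    intro j hj; simp [hσdef, hj]
  have hσσ : ∀ j, σ (σ j) = j := by
    intro j
    have hjl := j.isLt
    by_cases hj : (j : ℕ) = 0
    · rw [hσ0 j hj, hσ0 j hj]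
    · have h2 := hσ1 j hj
      have h3 : ¬ ((σ j) : ℕ) = 0 := by omega
      have h4 := hσ1 (σ j) h3
      apply Fin.ext
      rw [h4, h2]; omega
  have hAσ : ∀ (j k : Fin h), (A j k) ^ q = A (σ j) k := by
    intro j k
    have hjl := j.isLt
    rw [hAapp, hAapp]
    by_cases hj : (j : ℕ) = 0
    · rw [hσ0 j hj]; rw [if_pos hj, one_pow]
    · have hσj := hσ1 j hj
      have hσj0 : ¬ ((σ j) : ℕ) = 0 := by omega
      rw [if_neg hj, if_neg hσj0, hσj, ← pow_mul]
      apply hzpow _ _ ((k : ℕ) * (m + (j : ℕ)))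
      · rw [show (k : ℕ) * (m + (j : ℕ)) * q + (k : ℕ) * (m + (j : ℕ))
            = ((k : ℕ) * (m + (j : ℕ))) * (q + 1) from by ring]
        exact Dvd.dvd.mul_left hsdvd _
      · rw [show (k : ℕ) * (m + (h - (j : ℕ))) + (k : ℕ) * (m + (j : ℕ))
            = (k : ℕ) * ((m + (h - (j : ℕ))) + (m + (j : ℕ))) from by ring,
          show (m + (h - (j : ℕ))) + (m + (j : ℕ)) = s from by omega]
        exact dvd_mul_left s _
  have heσ : ∀ j, e (σ j) = e j := by
    intro j
    have hjl := j.isLt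
    by_cases hj : (j : ℕ) = 0
    · rw [hσ0 j hj]
    · have hσj := hσ1 j hj
      rw [heapp, heapp, if_neg hj, if_neg (by omega)]
  have hmain : ∀ u : Fin h → F, A.mulVec u = e → ∀ k0 : Fin h, u k0 ≠ 0 ∧ u k0 ^ q = u k0 := by
    intro u hu k0
    have huv : u = v := huniq u v hu hAv
    constructor
    · rw [huv, hvdef]
      exact mul_ne_zero (inv_ne_zero hev1) (hcoeffne k0 (by have := k0.isLt; omega))
    · set u' : Fin h → F := fun k => u k ^ q with hu'def
      have hstep : ∀ j, ∑ k, A (σ j) k * u' k = e (σ j) := by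
        intro j
        have h0 : ∑ k, A j k * u k = e j := by rw [← hmulapp, hu]
        have h1 := congrArg (fun z : F => z ^ q) h0
        replace h1 : (∑ k, A j k * u k) ^ q = e j ^ q := h1
        rw [hfrob (fun k => A j k * u k)] at h1
        have h3 : e j ^ q = e j := by
          rw [heapp]
          by_cases hj : (j : ℕ) = 0
          · rw [if_pos hj, one_pow]
          · rw [if_neg hj, zero_pow (by omega)]
        rw [h3] at h1
        rw [heσ]
        rw [← h1]
        apply Finset.sum_congr rfl
        intro k _
        rw [mul_pow, hAσ]
      have hu'A : A.mulVec u' = e := by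
        funext i
        have hst := hstep (σ i)
        rw [hσσ i] at hst
        rw [hmulapp]
        exact hst
      have h5 : u' = u := huniq u' u hu'A hu
      calc u k0 ^ q = u' k0 := rfl
      _ = u k0 := by rw [h5]
  exact ⟨⟨v, hAv, fun u hu => huniq u v hu hAv⟩, hmain⟩
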